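/- Let α > −1 be real and n an integer ≥ 0. Then for every 0 ≤ ρ ≤ 1 and 0 ≤ θ ≤ π, (1−ρ²)^α C_n^{α+3/2}(ρ cos θ) = (√π/(2 Γ(α+3/2))) Σ_l (2l+1) (p+l+3/2)_α R_n^{l,α}(ρ) P_l(cos θ), where the sum is over all integers l with 0 ≤ l ≤ n and n − l even, and p = (n−l)/2. -/

import Mathlib

open Real MeasureTheory

noncomputable def genBinom (a : ℝ) (p : ℕ) : ℝ :=
  (∏ j ∈ Finset.range p, (a - j)) / (Nat.factorial p : ℝ)

noncomputable def jacobiP (k : ℕ) (a b : ℝ) (x : ℝ) : ℝ :=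
  ∑ j ∈ Finset.range (k + 1),
    genBinom ((k : ℝ) + a) (k - j) * genBinom ((k : ℝ) + b) j *
      ((x - 1) / 2) ^ j * ((x + 1) / 2) ^ (k - j)

/-- generalized Pochhammer symbol `(x)_α = Γ(x+α)/Γ(x)` -/
noncomputable def pochG (x α : ℝ) : ℝ := Real.Gamma (x + α) / Real.Gamma x

/-- integer-order Pochhammer symbol `(x)_k = x(x+1)⋯(x+k−1)` -/
noncomputable def pochN (x : ℝ) (k : ℕ) : ℝ := ∏ j ∈ Finset.range k, (x + j)

/-- generalized 3D Zernike radial function `R_{l+2p}^{l,α}` -/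
noncomputable def R3 (α : ℝ) (l p : ℕ) (ρ : ℝ) : ℝ :=
  ρ ^ l * (1 - ρ ^ 2) ^ α * jacobiP p α ((l : ℝ) + 1 / 2) (2 * ρ ^ 2 - 1)

/-- generalized 2D Zernike radial function `²R_{m+2p}^{m,α}` -/
noncomputable def R2 (α : ℝ) (m p : ℕ) (ρ : ℝ) : ℝ :=
  ρ ^ m * (1 - ρ ^ 2) ^ α * jacobiP p α (m : ℝ) (2 * ρ ^ 2 - 1)

/-- spherical Bessel function of real order `a` -/
noncomputable def sphBessel (a : ℝ) (z : ℝ) : ℝ :=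
  Real.sqrt π / 2 * (z / 2) ^ a *
    ∑' k : ℕ, (-(z ^ 2) / 4) ^ k / ((Nat.factorial k : ℝ) * Real.Gamma ((k : ℝ) + a + 3 / 2))

/-- Gegenbauer polynomial `C_n^λ` -/
noncomputable def gegenbauer (n : ℕ) (lam : ℝ) (x : ℝ) : ℝ :=
  ∑ k ∈ Finset.range (n / 2 + 1),
    (-1) ^ k * Real.Gamma (((n - k : ℕ) : ℝ) + lam) /
      (Real.Gamma lam * (Nat.factorial k : ℝ) * (Nat.factorial (n - 2 * k) : ℝ)) *
      (2 * x) ^ (n - 2 * k)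

/-- Legendre polynomial `P_l` -/
noncomputable def legendreFun (l : ℕ) (x : ℝ) : ℝ :=
  (1 / 2 ^ l) * ∑ k ∈ Finset.range (l + 1),
    ((Nat.choose l k : ℝ)) ^ 2 * (x - 1) ^ (l - k) * (x + 1) ^ k

/-- associated Legendre function `P_l^m` -/
noncomputable def assocLegendre (l m : ℕ) (x : ℝ) : ℝ :=
  (1 - x ^ 2) ^ ((m : ℝ) / 2) * iteratedDeriv m (legendreFun l) x

/-- spherical harmonic `Y_l^m`, evaluated at a (unit) vector `v ∈ ℝ³`:
`cos θ = v 2`, `φ = arg (v 0 + i v 1)`. -/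
noncomputable def sphHarm (l : ℕ) (m : ℤ) (v : EuclideanSpace ℝ (Fin 3)) : ℂ :=
  (-1 : ℂ) ^ m *
    (Real.sqrt ((2 * l + 1) / (4 * π) *
      (Nat.factorial (l - m.natAbs) : ℝ) / (Nat.factorial (l + m.natAbs) : ℝ)) : ℝ) *
    (assocLegendre l m.natAbs (v 2) : ℝ) *
    Complex.exp (Complex.I * m * (Complex.arg (v 0 + Complex.I * v 1) : ℝ))

/-- generalized 3D Zernike function `Z_{nl}^{m,α}` on ℝ³ -/
noncomputable def Z3 (α : ℝ) (l p : ℕ) (m : ℤ) (ω : EuclideanSpace ℝ (Fin 3)) : ℂ :=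
  (R3 α l p ‖ω‖ : ℝ) * sphHarm l m (‖ω‖⁻¹ • ω)


-- ===== auxiliary lemmas =====

-- basic facts
lemma genBinom_zero (a : ℝ) : genBinom a 0 = 1 := by simp [genBinom]

lemma genBinom_succ_mul (a : ℝ) (p : ℕ) :
    (p + 1 : ℝ) * genBinom a (p + 1) = (a - p) * genBinom a p := by
  rw [genBinom, genBinom, Finset.prod_range_succ, Nat.factorial_succ]
  push_cast
  have h1 : (Nat.factorial p : ℝ) ≠ 0 := by positivity
  field_simp

lemma genBinom_vandermonde (x y : ℝ) : ∀ s : ℕ,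
    ∑ i ∈ Finset.range (s + 1), genBinom x i * genBinom y (s - i) = genBinom (x + y) s := by
  intro s
  induction s with
  | zero => simp [genBinom_zero]
  | succ s ih =>
    have key : (s + 1 : ℝ) * ∑ i ∈ Finset.range (s + 2), genBinom x i * genBinom y (s + 1 - i)
        = (x + y - s) * ∑ i ∈ Finset.range (s + 1), genBinom x i * genBinom y (s - i) := by
      rw [Finset.mul_sum, Finset.mul_sum]
      have lhs_split : ∀ i ∈ Finset.range (s + 2),
          (s + 1 : ℝ) * (genBinom x i * genBinom y (s + 1 - i))
          = (i : ℝ) * genBinom x i * genBinom y (s + 1 - i)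
            + ((s + 1 - i : ℕ) : ℝ) * genBinom y (s + 1 - i) * genBinom x i := by
        intro i hi
        rw [Finset.mem_range] at hi
        have : ((s + 1 - i : ℕ) : ℝ) = (s : ℝ) + 1 - i := by
          have : i ≤ s + 1 := by omega
          push_cast [this]; ring
        rw [this]; ring
      rw [Finset.sum_congr rfl lhs_split, Finset.sum_add_distrib]
      -- first piece: ∑_{i∈range(s+2)} i * genBinom x i * genBinom y (s+1-i)
      --   = ∑_{i∈range(s+1)} (x - i) * genBinom x i * genBinom y (s-i)
      have h1 : ∑ i ∈ Finset.range (s + 2), (i : ℝ) * genBinom x i * genBinom y (s + 1 - i)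
          = ∑ i ∈ Finset.range (s + 1), (x - i) * genBinom x i * genBinom y (s - i) := by
        rw [Finset.sum_range_succ']
        simp only [Nat.cast_zero, zero_mul]
        rw [add_zero]
        apply Finset.sum_congr rfl
        intro i hi
        have e1 : (↑(i + 1) : ℝ) * genBinom x (i + 1) = (x - i) * genBinom x i := by
          push_cast; exact genBinom_succ_mul x i
        have e2 : s + 1 - (i + 1) = s - i := by omega
        rw [e2, e1]
      -- second piece similarly
      have h2 : ∑ i ∈ Finset.range (s + 2), ((s + 1 - i : ℕ) : ℝ) * genBinom y (s + 1 - i) * genBinom x i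
          = ∑ i ∈ Finset.range (s + 1), (y - ((s - i : ℕ) : ℝ)) * genBinom y (s - i) * genBinom x i := by
        rw [Finset.sum_range_succ]
        simp only [Nat.sub_self, Nat.cast_zero, zero_mul]
        rw [add_zero]
        apply Finset.sum_congr rfl
        intro i hi
        rw [Finset.mem_range] at hi
        have e2 : s + 1 - i = (s - i) + 1 := by omega
        rw [e2]
        have e1 : (↑((s - i) + 1) : ℝ) * genBinom y ((s - i) + 1)
            = (y - (s - i : ℕ)) * genBinom y (s - i) := by
          push_cast; exact_mod_cast genBinom_succ_mul y (s - i)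
        rw [e1]
      rw [h1, h2, ← Finset.sum_add_distrib]
      apply Finset.sum_congr rfl
      intro i hi
      rw [Finset.mem_range] at hi
      have : ((s - i : ℕ) : ℝ) = (s : ℝ) - i := by
        have : i ≤ s := by omega
        push_cast [this]; ring
      rw [this]; ring
    have key2 : (s + 1 : ℝ) * genBinom (x + y) (s + 1) = (x + y - s) * genBinom (x + y) s := by
      exact_mod_cast genBinom_succ_mul (x + y) s
    have hne : (s + 1 : ℝ) ≠ 0 := by positivity
    have := key.trans (by rw [ih, ← key2])
    exact mul_left_cancel₀ hne this

lemma genBinom_nat_cast (n k : ℕ) : genBinom (n : ℝ) k = (n.choose k : ℝ) := by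
  rcases le_or_gt k n with h | h
  · rw [genBinom]
    have hp : ∏ j ∈ Finset.range k, ((n : ℝ) - j) = (n.descFactorial k : ℝ) := by
      rw [Nat.descFactorial_eq_prod_range, Nat.cast_prod]
      apply Finset.prod_congr rfl
      intro i hi
      rw [Finset.mem_range] at hi
      have : i ≤ n := by omega
      push_cast [this]; ring
    rw [hp, Nat.descFactorial_eq_factorial_mul_choose]
    push_cast
    rw [mul_comm, mul_div_assoc, div_self (by positivity : (k.factorial : ℝ) ≠ 0), mul_one]
  · rw [genBinom, Finset.prod_eq_zero (Finset.mem_range.2 h) (sub_self (n:ℝ)), Nat.choose_eq_zero_of_lt h]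
    simp

lemma genBinom_eq_zero (n k : ℕ) (h : n < k) : genBinom (n : ℝ) k = 0 := by
  rw [genBinom_nat_cast, Nat.choose_eq_zero_of_lt h, Nat.cast_zero]

/-- trinomial revision, real upper index -/
lemma genBinom_trinomial (a : ℝ) (j t : ℕ) (h : t ≤ j) :
    genBinom a j * genBinom (j : ℝ) t = genBinom a t * genBinom (a - t) (j - t) := by
  have hsplit : ∏ i ∈ Finset.range j, (a - i)
      = (∏ i ∈ Finset.range t, (a - i)) * ∏ i ∈ Finset.range (j - t), (a - t - i) := by
    have : j = t + (j - t) := by omega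
    rw [this, Finset.prod_range_add]
    have e : t + (j - t) - t = j - t := by omega
    rw [e]
    congr 1
    apply Finset.prod_congr rfl
    intro i _
    push_cast
    ring
  rw [genBinom_nat_cast, Nat.cast_choose ℝ h, genBinom, genBinom, genBinom, hsplit]
  have h1 : (t.factorial : ℝ) ≠ 0 := by positivity
  have h2 : ((j - t).factorial : ℝ) ≠ 0 := by positivity
  have h3 : (j.factorial : ℝ) ≠ 0 := by positivity
  field_simp

lemma genBinom_gamma (x : ℝ) : ∀ k : ℕ, 0 < x + 1 - k →
    genBinom x k = Real.Gamma (x + 1) / (Real.Gamma (x + 1 - k) * k.factorial) := by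
  intro k
  induction k with
  | zero =>
    intro h
    simp only [Nat.cast_zero, sub_zero] at h ⊢
    rw [genBinom]
    simp only [Finset.range_zero, Finset.prod_empty, Nat.factorial_zero, Nat.cast_one, mul_one]
    rw [div_self (ne_of_gt (Real.Gamma_pos_of_pos h))]
    norm_num
  | succ k ih =>
    intro h
    have hxk : 0 < x - k := by push_cast at h ⊢; linarith
    have hprev : 0 < x + 1 - k := by push_cast at h ⊢; linarith
    have hrec := genBinom_succ_mul x k
    have hkn : ((k:ℝ) + 1) ≠ 0 := by positivity
    have : genBinom x (k+1) = (x - k) * genBinom x k / (k + 1) := by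
      field_simp
      linarith [hrec]
    rw [this, ih hprev]
    have hg : Real.Gamma (x + 1 - k) = (x - k) * Real.Gamma (x - k) := by
      have : x + 1 - k = (x - k) + 1 := by ring
      rw [this, Real.Gamma_add_one (ne_of_gt hxk)]
    have e : x + 1 - ((k:ℕ)+1:ℕ) = x - k := by push_cast; ring
    rw [e, hg, Nat.factorial_succ]
    have h1 : Real.Gamma (x - k) ≠ 0 := ne_of_gt (Real.Gamma_pos_of_pos hxk)
    have h2 : (k.factorial : ℝ) ≠ 0 := by positivity
    push_cast
    field_simp

lemma jacobiP_monomial (p : ℕ) (a b : ℝ) (y : ℝ) :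
    jacobiP p a b (2 * y - 1)
      = ∑ s ∈ Finset.range (p + 1),
          (-1 : ℝ) ^ (p - s) * genBinom ((p : ℝ) + b) (p - s) *
            genBinom ((p : ℝ) + a + b + s) s * y ^ s := by
  have step1 : jacobiP p a b (2 * y - 1)
      = ∑ j ∈ Finset.range (p + 1), ∑ i ∈ Finset.range (j + 1),
          genBinom ((p : ℝ) + a) (p - j) * genBinom ((p : ℝ) + b) j *
            ((j.choose i : ℝ) * (-1) ^ (j - i) * y ^ i) * y ^ (p - j) := by
    rw [jacobiP]
    apply Finset.sum_congr rfl
    intro j _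
    have e1 : (2 * y - 1 - 1) / 2 = y - 1 := by ring
    have e2 : (2 * y - 1 + 1) / 2 = y := by ring
    rw [e1, e2]
    have expand : (y - 1) ^ j = ∑ i ∈ Finset.range (j + 1),
        (j.choose i : ℝ) * (-1) ^ (j - i) * y ^ i := by
      rw [sub_eq_add_neg, add_pow]
      apply Finset.sum_congr rfl
      intro i _
      ring
    rw [expand, Finset.mul_sum, Finset.sum_mul]
  have step2 : ∑ s ∈ Finset.range (p + 1),
          (-1 : ℝ) ^ (p - s) * genBinom ((p : ℝ) + b) (p - s) *
            genBinom ((p : ℝ) + a + b + s) s * y ^ s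
      = ∑ s ∈ Finset.range (p + 1), ∑ u ∈ Finset.range (s + 1),
          (-1 : ℝ) ^ (p - s) * genBinom ((p : ℝ) + b) (p - s) *
            (genBinom (b + s) u * genBinom ((p : ℝ) + a) (s - u)) * y ^ s := by
    apply Finset.sum_congr rfl
    intro s _
    rw [← Finset.sum_mul, ← Finset.mul_sum, genBinom_vandermonde (b + s) ((p:ℝ) + a) s]
    congr 2
    ring_nf
  rw [step1, step2, Finset.sum_sigma', Finset.sum_sigma']
  apply Finset.sum_nbij' (fun q => ⟨p - q.1 + q.2, q.2⟩ : (Σ _ : ℕ, ℕ) → (Σ _ : ℕ, ℕ))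
      (fun q => ⟨p - q.1 + q.2, q.2⟩ : (Σ _ : ℕ, ℕ) → (Σ _ : ℕ, ℕ))
  · rintro ⟨j, i⟩ hm
    dsimp only
    simp only [Finset.mem_sigma, Finset.mem_range] at hm ⊢
    omega
  · rintro ⟨s, u⟩ hm
    dsimp only
    simp only [Finset.mem_sigma, Finset.mem_range] at hm ⊢
    omega
  · rintro ⟨j, i⟩ hm
    dsimp only
    simp only [Finset.mem_sigma, Finset.mem_range] at hm
    exact congrArg (fun t => (⟨t, i⟩ : Σ _ : ℕ, ℕ)) (by omega)
  · rintro ⟨s, u⟩ hm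
    dsimp only
    simp only [Finset.mem_sigma, Finset.mem_range] at hm
    exact congrArg (fun t => (⟨t, u⟩ : Σ _ : ℕ, ℕ)) (by omega)
  · rintro ⟨j, i⟩ hm
    dsimp only
    simp only [Finset.mem_sigma, Finset.mem_range] at hm
    obtain ⟨hj, hi⟩ := hm
    have hj' : j ≤ p := by omega
    have hi' : i ≤ j := by omega
    set s := p - j + i with hs
    have hsp : s ≤ p := by omega
    have hps : p - s = j - i := by omega
    have hchoose : (j.choose i : ℝ) = genBinom (j : ℝ) (p - s) := by
      rw [genBinom_nat_cast, hps, Nat.choose_symm hi']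
    have htri := genBinom_trinomial ((p : ℝ) + b) j (p - s) (by omega)
    have hcast : (p : ℝ) + b - ((p - s : ℕ) : ℝ) = b + s := by
      have h1 : ((p - s : ℕ) : ℝ) = (p : ℝ) - s := by
        push_cast [hsp]; ring
      rw [h1]; ring
    have hji : j - (p - s) = i := by omega
    rw [hcast, hji] at htri
    have hpj : p - j = s - i := by omega
    -- final algebra
    calc genBinom ((p : ℝ) + a) (p - j) * genBinom ((p : ℝ) + b) j *
            ((j.choose i : ℝ) * (-1) ^ (j - i) * y ^ i) * y ^ (p - j)
        = (genBinom ((p : ℝ) + b) j * genBinom (j : ℝ) (p - s)) * (-1) ^ (j - i) *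
            genBinom ((p : ℝ) + a) (p - j) * (y ^ i * y ^ (p - j)) := by
          rw [hchoose]; ring
      _ = (-1 : ℝ) ^ (p - s) * genBinom ((p : ℝ) + b) (p - s) *
            (genBinom (b + s) i * genBinom ((p : ℝ) + a) (s - i)) * y ^ s := by
          rw [htri, ← hps, hpj, ← pow_add]
          have : i + (s - i) = s := by omega
          rw [this]; ring

/-- coefficient of the shifted Legendre polynomial -/
noncomputable def gL (l j : ℕ) : ℝ := (l.choose j : ℝ) * ((l + j).choose j : ℝ)

lemma legendre_vform (l : ℕ) (c : ℝ) :
    legendreFun l c = ∑ j ∈ Finset.range (l + 1), gL l j * ((c - 1) / 2) ^ j := by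
  set v : ℝ := (c - 1) / 2 with hv
  have step1 : legendreFun l c
      = ∑ k ∈ Finset.range (l + 1), (l.choose k : ℝ) ^ 2 * v ^ (l - k) * (v + 1) ^ k := by
    rw [legendreFun, Finset.mul_sum]
    apply Finset.sum_congr rfl
    intro k hk
    rw [Finset.mem_range] at hk
    have hc1 : c - 1 = 2 * v := by rw [hv]; ring
    have hc2 : c + 1 = 2 * (v + 1) := by rw [hv]; ring
    rw [hc1, hc2, mul_pow, mul_pow]
    have h2 : (2:ℝ) ^ (l - k) * 2 ^ k = 2 ^ l := by
      rw [← pow_add]; congr 1; omega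
    have h2l : (2:ℝ) ^ l ≠ 0 := by positivity
    field_simp
    rw [← h2]
    ring
  have step2 : ∀ k, (v + 1) ^ k = ∑ i ∈ Finset.range (k + 1), (k.choose i : ℝ) * v ^ i := by
    intro k
    rw [add_pow]
    apply Finset.sum_congr rfl
    intro i _
    simp [mul_comm]
  rw [step1]
  rw [show ∑ k ∈ Finset.range (l + 1), (l.choose k : ℝ) ^ 2 * v ^ (l - k) * (v + 1) ^ k
      = ∑ k ∈ Finset.range (l + 1), ∑ i ∈ Finset.range (k + 1),
          (l.choose k : ℝ) ^ 2 * v ^ (l - k) * ((k.choose i : ℝ) * v ^ i) from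
    Finset.sum_congr rfl (fun k _ => by rw [step2 k, Finset.mul_sum])]
  rw [Finset.sum_sigma']
  have step4 : ∀ j, j < l + 1 → gL l j
      = ∑ i ∈ Finset.range (j + 1),
          (l.choose (l - j + i) : ℝ) ^ 2 * ((l - j + i).choose i : ℝ) := by
    intro j hj
    have hjl : j ≤ l := by omega
    have inner : ∀ i ∈ Finset.range (j + 1),
        (l.choose (l - j + i) : ℝ) ^ 2 * ((l - j + i).choose i : ℝ)
        = (l.choose j : ℝ) * (genBinom (j : ℝ) i * genBinom (l : ℝ) (j - i)) := by
      intro i hi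
      rw [Finset.mem_range] at hi
      have hij : i ≤ j := by omega
      set k := l - j + i with hk
      have hkl : k ≤ l := by omega
      have htle : l - j ≤ k := by omega
      have htri := genBinom_trinomial ((l : ℝ)) k (l - j) htle
      have hcast : (l : ℝ) - ((l - j : ℕ) : ℝ) = ((j : ℕ) : ℝ) := by
        push_cast [hjl]; ring
      have hki : k - (l - j) = i := by omega
      rw [hcast, hki] at htri
      -- C(k, l-j) = C(k, i)
      have hsym : (k.choose (l - j)) = (k.choose i) := by
        have : k - i = l - j := by omega
        rw [← this, Nat.choose_symm (by omega : i ≤ k)]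
      -- C(l, k) = C(l, j - i)
      have hsym2 : (l.choose k) = (l.choose (j - i)) := by
        have : l - k = j - i := by omega
        rw [← this, Nat.choose_symm hkl]
      have h1 : (l.choose k : ℝ) * (k.choose i : ℝ) = (l.choose j : ℝ) * genBinom (j:ℝ) i := by
        have hgb : genBinom (k:ℝ) i = genBinom (k:ℝ) (l - j) := by
          rw [genBinom_nat_cast, genBinom_nat_cast, hsym]
        rw [← genBinom_nat_cast l k, ← genBinom_nat_cast k i, hgb, htri,
          genBinom_nat_cast l (l - j), Nat.choose_symm hjl]
      calc (l.choose k : ℝ) ^ 2 * ((l - j + i).choose i : ℝ)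
          = ((l.choose k : ℝ) * (k.choose i : ℝ)) * (l.choose k : ℝ) := by rw [← hk]; ring
        _ = (l.choose j : ℝ) * genBinom (j:ℝ) i * (l.choose (j - i) : ℝ) := by
            rw [h1, hsym2]
        _ = (l.choose j : ℝ) * (genBinom (j : ℝ) i * genBinom (l : ℝ) (j - i)) := by
            rw [genBinom_nat_cast l (j - i)]; ring
    rw [Finset.sum_congr rfl inner, ← Finset.mul_sum, genBinom_vandermonde]
    rw [gL]
    congr 1
    rw [← genBinom_nat_cast]
    congr 1
    push_cast
    ring
  rw [show ∑ j ∈ Finset.range (l + 1), gL l j * v ^ j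
      = ∑ j ∈ Finset.range (l + 1), ∑ i ∈ Finset.range (j + 1),
          (l.choose (l - j + i) : ℝ) ^ 2 * ((l - j + i).choose i : ℝ) * v ^ j from by
    apply Finset.sum_congr rfl
    intro j hj
    rw [Finset.mem_range] at hj
    rw [step4 j (by omega), Finset.sum_mul]]
  rw [Finset.sum_sigma']
  apply Finset.sum_nbij' (fun q => ⟨l - q.1 + q.2, q.2⟩ : (Σ _ : ℕ, ℕ) → (Σ _ : ℕ, ℕ))
      (fun q => ⟨l - q.1 + q.2, q.2⟩ : (Σ _ : ℕ, ℕ) → (Σ _ : ℕ, ℕ))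
  · rintro ⟨k, i⟩ hm
    dsimp only
    simp only [Finset.mem_sigma, Finset.mem_range] at hm ⊢
    omega
  · rintro ⟨j, i⟩ hm
    dsimp only
    simp only [Finset.mem_sigma, Finset.mem_range] at hm ⊢
    omega
  · rintro ⟨k, i⟩ hm
    dsimp only
    simp only [Finset.mem_sigma, Finset.mem_range] at hm
    exact congrArg (fun t => (⟨t, i⟩ : Σ _ : ℕ, ℕ)) (by omega)
  · rintro ⟨j, i⟩ hm
    dsimp only
    simp only [Finset.mem_sigma, Finset.mem_range] at hm
    exact congrArg (fun t => (⟨t, i⟩ : Σ _ : ℕ, ℕ)) (by omega)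
  · rintro ⟨k, i⟩ hm
    dsimp only
    simp only [Finset.mem_sigma, Finset.mem_range] at hm
    have e1 : l - (l - k + i) + i = k := by omega
    rw [e1]
    have e2 : l - k + i = (l - k) + i := rfl
    rw [e2, pow_add]
    ring

lemma choose_ratio (n k : ℕ) (h : k ≤ n + 1) :
    ((n:ℝ) + 1 - k) * ((n+1).choose k : ℝ) = ((n:ℝ) + 1) * (n.choose k : ℝ) := by
  have h0 := congrArg (Nat.cast : ℕ → ℝ) (Nat.choose_mul_succ_eq n k)
  push_cast [h] at h0
  linarith

lemma choose_right_ratio (n k : ℕ) (h : k ≤ n) :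
    ((k:ℝ) + 1) * (n.choose (k+1) : ℝ) = ((n:ℝ) - k) * (n.choose k : ℝ) := by
  have h0 := congrArg (Nat.cast : ℕ → ℝ) (Nat.choose_succ_right_eq n k)
  push_cast [h] at h0
  linarith

lemma succ_choose_ratio (n k : ℕ) :
    ((n:ℝ) + 1) * (n.choose k : ℝ) = ((k:ℝ) + 1) * ((n+1).choose (k+1) : ℝ) := by
  have h0 := congrArg (Nat.cast : ℕ → ℝ) (Nat.add_one_mul_choose_eq n k)
  push_cast at h0
  linarith

lemma gL_rec (L j : ℕ) :
    ((L:ℝ) + 2) * gL (L+2) (j+1) + ((L:ℝ) + 1) * gL L (j+1)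
      = (2*(L:ℝ) + 3) * (gL (L+1) (j+1) + 2 * gL (L+1) j) := by
  rcases le_or_gt (j+1) (L+1) with hle | hgt
  · set J := j + 1 with hJ
    have hJR : (J:ℝ) = (j:ℝ) + 1 := by rw [hJ]; push_cast; ring
    have hd1 : ((L:ℝ) + 2 - J) ≠ 0 := by
      have : (J:ℝ) ≤ (L:ℝ) + 1 := by exact_mod_cast hle
      linarith
    have hd2 : ((L:ℝ) + 1 + J) ≠ 0 := by positivity
    have hd3 : ((L:ℝ) + 2) ≠ 0 := by positivity
    have hd4 : ((L:ℝ) + 1) ≠ 0 := by positivity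
    set a : ℝ := ((L+1).choose J : ℝ) with ha
    set b : ℝ := ((L+1+J).choose J : ℝ) with hb
    have v1 : ((L+2).choose J : ℝ) = ((L:ℝ) + 2) * a / ((L:ℝ) + 2 - J) := by
      rw [eq_div_iff hd1]
      have := choose_ratio (L+1) J (by omega)
      push_cast at this ⊢
      linarith
    have v2 : ((L+2+J).choose J : ℝ) = ((L:ℝ) + 2 + J) * b / ((L:ℝ) + 2) := by
      rw [eq_div_iff hd3]
      have := choose_ratio (L+1+J) J (by omega)
      have e : L+1+J+1 = L+2+J := by omega
      rw [e] at this
      push_cast at this ⊢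
      linarith
    have v3 : ((L).choose J : ℝ) = ((L:ℝ) + 1 - J) * a / ((L:ℝ) + 1) := by
      rw [eq_div_iff hd4]
      have := choose_ratio L J hle
      push_cast at this ⊢
      linarith
    have v4 : ((L+J).choose J : ℝ) = ((L:ℝ) + 1) * b / ((L:ℝ) + 1 + J) := by
      rw [eq_div_iff hd2]
      have := choose_ratio (L+J) J (by omega)
      have e : L+J+1 = L+1+J := by omega
      rw [e] at this
      push_cast at this ⊢
      linarith
    have v5 : ((L+1).choose j : ℝ) = (J:ℝ) * a / ((L:ℝ) + 2 - J) := by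
      rw [eq_div_iff hd1]
      have := choose_right_ratio (L+1) j (by omega)
      rw [← hJ] at this
      push_cast [hJR] at this ⊢
      linarith
    have v6 : ((L+J).choose j : ℝ) = (J:ℝ) * b / ((L:ℝ) + 1 + J) := by
      rw [eq_div_iff hd2]
      have := succ_choose_ratio (L+J) j
      have e1 : L+J+1 = L+1+J := by omega
      rw [e1, ← hJ] at this
      push_cast [hJR] at this ⊢
      linarith
    rw [gL, gL, gL, gL]
    have e4 : L+1+j = L+J := by omega
    rw [e4, v1, v2, v3, v4, v5, v6, ← ha, ← hb]
    field_simp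
    ring
  · -- j + 1 ≥ L + 2
    rcases Nat.lt_or_ge (L+2) (j+1) with hgt2 | heq
    · -- j+1 ≥ L+3 : everything vanishes
      rw [gL, gL, gL, gL]
      rw [Nat.choose_eq_zero_of_lt (show L+2 < j+1 by omega),
        Nat.choose_eq_zero_of_lt (show L < j+1 by omega),
        Nat.choose_eq_zero_of_lt (show L+1 < j+1 by omega),
        Nat.choose_eq_zero_of_lt (show L+1 < j by omega)]
      norm_num
    · -- j+1 = L+2
      have hj : j = L + 1 := by omega
      subst hj
      rw [gL, gL, gL, gL]
      rw [Nat.choose_eq_zero_of_lt (show L < L+1+1 by omega),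
        Nat.choose_eq_zero_of_lt (show L+1 < L+1+1 by omega)]
      have e0 : L+1+1 = L+2 := by omega
      rw [e0]
      have e1 : L+2+(L+2) = 2*L+4 := by omega
      have e2 : L+1+(L+1) = 2*L+2 := by omega
      rw [e1, e2, Nat.choose_self, Nat.choose_self]
      have h1 := succ_choose_ratio (2*L+3) (L+1)
      have h2 := choose_ratio (2*L+2) (L+1) (by omega)
      have e3 : 2*L+3+1 = 2*L+4 := by omega
      have e4 : L+1+1 = L+2 := by omega
      have e5 : 2*L+2+1 = 2*L+3 := by omega
      rw [e3, e4] at h1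
      rw [e5] at h2
      push_cast at h1 h2 ⊢
      linear_combination (-1 : ℝ) * h1 + 2 * h2


lemma gL_zero_right (l : ℕ) : gL l 0 = 1 := by simp [gL]

lemma gL_eq_zero (l j : ℕ) (h : l < j) : gL l j = 0 := by
  rw [gL, Nat.choose_eq_zero_of_lt h]; norm_num

lemma legendre_rec (l : ℕ) (c : ℝ) :
    (2*(l:ℝ)+1) * c * legendreFun l c
      = ((l:ℝ)+1) * legendreFun (l+1) c + (l:ℝ) * legendreFun (l-1) c := by
  rcases l with _ | L
  · norm_num [legendreFun, Finset.sum_range_succ]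
    ring
  · have hL : (L + 1 : ℕ) - 1 = L := by omega
    rw [hL, legendre_vform, legendre_vform, legendre_vform]
    set v : ℝ := (c - 1) / 2 with hv
    have hc : c = 2*v + 1 := by rw [hv]; ring
    push_cast
    rw [hc]
    have ext1 : ∑ j ∈ Finset.range (L + 3), ((L:ℝ)+1) * (gL L j * v ^ j)
        = ∑ j ∈ Finset.range (L + 1), ((L:ℝ)+1) * (gL L j * v ^ j) := by
      rw [Finset.sum_range_succ, Finset.sum_range_succ,
        gL_eq_zero L (L+1) (by omega), gL_eq_zero L (L+2) (by omega)]
      ring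
    have ext2 : ∑ j ∈ Finset.range (L + 3), (2*(L:ℝ)+3) * gL (L+1) j * v ^ j
        = ∑ j ∈ Finset.range (L + 2), (2*(L:ℝ)+3) * gL (L+1) j * v ^ j := by
      rw [Finset.sum_range_succ, gL_eq_zero (L+1) (L+2) (by omega)]
      ring
    have shift : ∑ j ∈ Finset.range (L + 3),
          (if j = 0 then 0 else 2*(2*(L:ℝ)+3) * gL (L+1) (j-1) * v ^ j)
        = ∑ j ∈ Finset.range (L + 2), 2*(2*(L:ℝ)+3) * gL (L+1) j * v ^ (j+1) := by
      rw [Finset.sum_range_succ']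
      norm_num
    have rhs_eq : ((L:ℝ)+1+1) * ∑ j ∈ Finset.range (L + 3), gL (L+1+1) j * v ^ j
          + ((L:ℝ)+1) * ∑ j ∈ Finset.range (L + 1), gL L j * v ^ j
        = ∑ j ∈ Finset.range (L + 3),
            (((L:ℝ)+2) * (gL (L+2) j * v ^ j) + ((L:ℝ)+1) * (gL L j * v ^ j)) := by
      rw [Finset.mul_sum, Finset.mul_sum, ← ext1, ← Finset.sum_add_distrib]
      apply Finset.sum_congr rfl
      intro j _
      rw [show L+1+1 = L+2 from by omega]
      ring
    have lhs_eq : (2*((L:ℝ)+1)+1) * (2*v+1) * ∑ j ∈ Finset.range (L + 2), gL (L+1) j * v ^ j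
        = ∑ j ∈ Finset.range (L + 3),
            ((2*(L:ℝ)+3) * gL (L+1) j * v ^ j
              + (if j = 0 then 0 else 2*(2*(L:ℝ)+3) * gL (L+1) (j-1) * v ^ j)) := by
      rw [Finset.sum_add_distrib, shift, ext2, ← Finset.sum_add_distrib, Finset.mul_sum]
      apply Finset.sum_congr rfl
      intro j _
      ring
    rw [lhs_eq, rhs_eq]
    apply Finset.sum_congr rfl
    intro j _
    rcases j with _ | j
    · rw [if_pos rfl]
      simp only [gL_zero_right, pow_zero, mul_one, add_zero, Nat.cast_zero]
      ring
    · rw [if_neg (Nat.succ_ne_zero j), Nat.succ_sub_one]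
      have h := gL_rec L j
      push_cast
      linear_combination (-(v^(j+1))) * h

/-- coefficient of `P_{m-2t}` in the Legendre expansion of `x^m` -/
noncomputable def BC (m t : ℕ) : ℝ :=
  Real.sqrt π * (2*((m - 2*t : ℕ) : ℝ) + 1) * m.factorial /
    (2^(m+1) * t.factorial * Real.Gamma (((m - t : ℕ) : ℝ) + 3/2))

lemma Gamma_shift_pos (x : ℝ) (hx : 0 ≤ x) : 0 < Real.Gamma (x + 3/2) :=
  Real.Gamma_pos_of_pos (by linarith)

lemma BC_rec_zero (m : ℕ) :
    BC (m+1) 0 = BC m 0 * (((m:ℕ):ℝ)+1) / (2*((m:ℕ):ℝ)+1) := by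
  rw [BC, BC]
  simp only [Nat.mul_zero, Nat.sub_zero]
  have hg : Real.Gamma (((m+1 : ℕ) : ℝ) + 3/2) = ((m:ℝ) + 3/2) * Real.Gamma ((m:ℝ) + 3/2) := by
    have : ((m+1 : ℕ) : ℝ) + 3/2 = ((m:ℝ) + 3/2) + 1 := by push_cast; ring
    rw [this, Real.Gamma_add_one (by positivity)]
  rw [hg]
  have hΓ : Real.Gamma ((m:ℝ) + 3/2) ≠ 0 := ne_of_gt (Gamma_shift_pos _ (by positivity))
  have hf : (m.factorial : ℝ) ≠ 0 := by positivity
  have h2 : (2:ℝ)^(m+1) ≠ 0 := by positivity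
  have h3 : (2*(m:ℝ)+1) ≠ 0 := by positivity
  have h4 : ((m:ℝ) + 3/2) ≠ 0 := by positivity
  rw [Nat.factorial_succ]
  push_cast
  field_simp
  ring

lemma BC_rec_main (m t : ℕ) (h : 2*(t+1) ≤ m) :
    BC (m+1) (t+1)
      = BC m (t+1) * (((m - 2*(t+1) : ℕ):ℝ)+1) / (2*((m - 2*(t+1) : ℕ):ℝ)+1)
        + BC m t * ((m - 2*t : ℕ):ℝ) / (2*((m - 2*t : ℕ):ℝ)+1) := by
  rw [BC, BC, BC]
  have e1 : (m + 1 - 2*(t+1) : ℕ) = m - 2*(t+1) + 1 := by omega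
  have e2 : (m + 1 - (t+1) : ℕ) = m - t := by omega
  have e3 : (m - 2*t : ℕ) = (m - 2*(t+1) : ℕ) + 2 := by omega
  have e4 : (m - t : ℕ) = (m - (t+1) : ℕ) + 1 := by omega
  rw [e1, e2, e3, e4]
  set l : ℕ := m - 2*(t+1) with hl
  set d : ℕ := m - (t+1) with hd
  have hg : Real.Gamma (((d+1 : ℕ) : ℝ) + 3/2) = ((d:ℝ) + 3/2) * Real.Gamma ((d:ℝ) + 3/2) := by
    have : ((d+1 : ℕ) : ℝ) + 3/2 = ((d:ℝ) + 3/2) + 1 := by push_cast; ring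
    rw [this, Real.Gamma_add_one (by positivity)]
  rw [hg]
  have hΓ : Real.Gamma ((d:ℝ) + 3/2) ≠ 0 := ne_of_gt (Gamma_shift_pos _ (by positivity))
  have hf : (m.factorial : ℝ) ≠ 0 := by positivity
  have hft : (t.factorial : ℝ) ≠ 0 := by positivity
  have h2 : (2:ℝ)^(m+1) ≠ 0 := by positivity
  have h3 : (2*((l:ℕ):ℝ)+1) ≠ 0 := by positivity
  have h4 : ((d:ℝ) + 3/2) ≠ 0 := by positivity
  have h5 : (2*(((l:ℕ):ℝ)+2)+1) ≠ 0 := by positivity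
  have hmd : (m:ℝ) = (l:ℝ) + 2*t + 2 := by
    have : m = l + 2*t + 2 := by omega
    exact_mod_cast congrArg (Nat.cast : ℕ → ℝ) this
  have hdd : (d:ℝ) = (l:ℝ) + t + 1 := by
    have : d = l + t + 1 := by omega
    exact_mod_cast congrArg (Nat.cast : ℕ → ℝ) this
  rw [Nat.factorial_succ m, Nat.factorial_succ t]
  push_cast
  rw [hmd, hdd]
  field_simp
  ring

lemma BC_rec_edge (t : ℕ) :
    BC (2*t+2) (t+1) = BC (2*t+1) t * (((2*t+1 - 2*t : ℕ):ℝ)) / (2*((2*t+1 - 2*t : ℕ):ℝ)+1) := by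
  rw [BC, BC]
  have e1 : (2*t+2 - 2*(t+1) : ℕ) = 0 := by omega
  have e2 : (2*t+2 - (t+1) : ℕ) = t + 1 := by omega
  have e3 : (2*t+1 - 2*t : ℕ) = 1 := by omega
  have e4 : (2*t+1 - t : ℕ) = t + 1 := by omega
  rw [e1, e2, e3, e4]
  have hΓ : Real.Gamma (((t+1:ℕ):ℝ) + 3/2) ≠ 0 := ne_of_gt (Gamma_shift_pos _ (by positivity))
  have hf : ((2*t+1).factorial : ℝ) ≠ 0 := by positivity
  have hft : (t.factorial : ℝ) ≠ 0 := by positivity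
  have h2 : (2:ℝ)^(2*t+1+1) ≠ 0 := by positivity
  have hfe : ((2*t+2).factorial : ℝ) = (2*(t:ℝ)+2) * ((2*t+1).factorial : ℝ) := by
    rw [show 2*t+2 = (2*t+1)+1 from by omega, Nat.factorial_succ]
    push_cast
    ring
  have hfe2 : ((t+1).factorial : ℝ) = ((t:ℝ)+1) * (t.factorial : ℝ) := by
    rw [Nat.factorial_succ]; push_cast; ring
  rw [hfe, hfe2]
  have h6 : (2:ℝ)^(2*t+2+1) = 2 * (2:ℝ)^(2*t+1+1) := by
    rw [show 2*t+2+1 = (2*t+1+1)+1 from by omega, pow_succ]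
    ring
  rw [h6]
  push_cast
  field_simp
  ring


lemma legendreFun_zero (c : ℝ) : legendreFun 0 c = 1 := by
  simp [legendreFun]

lemma sqrt_pi_ne : Real.sqrt π ≠ 0 := by
  have : (0:ℝ) < π := Real.pi_pos
  positivity

lemma Gamma_three_halves : Real.Gamma (3/2 : ℝ) = Real.sqrt π / 2 := by
  have : (3/2 : ℝ) = 1/2 + 1 := by norm_num
  rw [this, Real.Gamma_add_one (by norm_num), Real.Gamma_one_half_eq]
  ring

lemma monomial_expand (m : ℕ) (c : ℝ) :
    c ^ m = ∑ t ∈ Finset.range (m / 2 + 1), BC m t * legendreFun (m - 2*t) c := by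
  induction m with
  | zero =>
    rw [Finset.sum_range_one]
    norm_num [legendreFun_zero]
    rw [BC]
    norm_num [Gamma_three_halves]
    have : Real.sqrt π ≠ 0 := by positivity
    field_simp
  | succ m ih =>
    have key : c ^ (m+1) = c * c^m := by ring
    rw [key, ih, Finset.mul_sum]
    have hterm : ∀ t ∈ Finset.range (m/2+1),
        c * (BC m t * legendreFun (m - 2*t) c)
        = BC m t * (((m-2*t:ℕ):ℝ)+1)/(2*((m-2*t:ℕ):ℝ)+1) * legendreFun (m+1 - 2*t) c
          + BC m t * ((m-2*t:ℕ):ℝ)/(2*((m-2*t:ℕ):ℝ)+1) * legendreFun (m+1 - 2*(t+1)) c := by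
      intro t ht
      rw [Finset.mem_range] at ht
      have h2t : 2*t ≤ m := by omega
      set l : ℕ := m - 2*t with hl
      have hne : (2*(l:ℝ)+1) ≠ 0 := by positivity
      have hdiv : c * legendreFun l c
          = (((l:ℝ)+1) * legendreFun (l+1) c + (l:ℝ) * legendreFun (l-1) c)/(2*(l:ℝ)+1) := by
        rw [eq_div_iff hne]
        linear_combination legendre_rec l c
      have e1 : m + 1 - 2*t = l + 1 := by omega
      have e2 : m + 1 - 2*(t+1) = l - 1 := by omega
      rw [e1, e2, show c * (BC m t * legendreFun l c) = BC m t * (c * legendreFun l c) from by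
        ring, hdiv]
      field_simp
    rw [Finset.sum_congr rfl hterm, Finset.sum_add_distrib]
    rcases Nat.even_or_odd m with ⟨M, hM⟩ | ⟨M, hM⟩
    · -- m = 2M even
      have hm : m = 2*M := by omega
      subst hm
      rw [show (2*M)/2 + 1 = M + 1 from by omega, show (2*M+1)/2 + 1 = M + 1 from by omega]
      rw [Finset.sum_range_succ (fun t => BC (2*M) t * ((2*M-2*t:ℕ):ℝ)/(2*((2*M-2*t:ℕ):ℝ)+1)
        * legendreFun (2*M+1 - 2*(t+1)) c) M]
      rw [show BC (2*M) M * ((2*M-2*M:ℕ):ℝ)/(2*((2*M-2*M:ℕ):ℝ)+1)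
            * legendreFun (2*M+1 - 2*(M+1)) c = 0 from by
        rw [show (2*M-2*M:ℕ) = 0 from by omega]
        norm_num]
      rw [add_zero, Finset.sum_range_succ' (fun t => BC (2*M) t * (((2*M-2*t:ℕ):ℝ)+1)/(2*((2*M-2*t:ℕ):ℝ)+1)
        * legendreFun (2*M+1 - 2*t) c) M, Finset.sum_range_succ'
        (fun t => BC (2*M+1) t * legendreFun (2*M+1 - 2*t) c) M]
      have hmain : ∀ t ∈ Finset.range M,
          BC (2*M+1) (t+1) * legendreFun (2*M+1 - 2*(t+1)) c
          = BC (2*M) (t+1) * (((2*M-2*(t+1):ℕ):ℝ)+1)/(2*((2*M-2*(t+1):ℕ):ℝ)+1)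
              * legendreFun (2*M+1 - 2*(t+1)) c
            + BC (2*M) t * ((2*M-2*t:ℕ):ℝ)/(2*((2*M-2*t:ℕ):ℝ)+1)
              * legendreFun (2*M+1 - 2*(t+1)) c := by
        intro t ht
        rw [Finset.mem_range] at ht
        have := BC_rec_main (2*M) t (by omega)
        rw [show 2*M+1 = (2*M)+1 from rfl, this]
        ring
      have hzero : BC (2*M+1) 0 * legendreFun (2*M+1 - 2*0) c
          = BC (2*M) 0 * (((2*M-2*0:ℕ):ℝ)+1)/(2*((2*M-2*0:ℕ):ℝ)+1)
            * legendreFun (2*M+1 - 2*0) c := by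
        have := BC_rec_zero (2*M)
        rw [show 2*M+1 = (2*M)+1 from rfl, this, show (2*M-2*0:ℕ) = (2*M:ℕ) from by omega]
        try (push_cast; ring)
      rw [Finset.sum_congr rfl hmain, Finset.sum_add_distrib, hzero]
      ring
    · -- m = 2M+1 odd
      subst hM
      rw [show (2*M+1)/2 + 1 = M + 1 from by omega, show (2*M+1+1)/2 + 1 = M + 2 from by omega]
      rw [Finset.sum_range_succ' (fun t => BC (2*M+1+1) t * legendreFun (2*M+1+1 - 2*t) c) (M+1)]
      rw [Finset.sum_range_succ' _ M]
      rw [Finset.sum_range_succ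
        (fun t => BC (2*M+1+1) (t+1) * legendreFun (2*M+1+1 - 2*(t+1)) c) M]
      rw [Finset.sum_range_succ
        (fun t => BC (2*M+1) t * ((2*M+1-2*t:ℕ):ℝ)/(2*((2*M+1-2*t:ℕ):ℝ)+1)
          * legendreFun (2*M+1+1 - 2*(t+1)) c) M]
      -- goal: (Σ f(t+1) + f0) + (Σ g t + g M) = (Σ h(t+1) + h(M+1)) + h 0
      have hedge : BC (2*M+1+1) (M+1) * legendreFun (2*M+1+1 - 2*(M+1)) c
          = BC (2*M+1) M * ((2*M+1-2*M:ℕ):ℝ)/(2*((2*M+1-2*M:ℕ):ℝ)+1)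
            * legendreFun (2*M+1+1 - 2*(M+1)) c := by
        have := BC_rec_edge M
        rw [show 2*M+1+1 = 2*M+2 from by omega, this]
      have hzero : BC (2*M+1+1) 0 * legendreFun (2*M+1+1 - 2*0) c
          = BC (2*M+1) 0 * (((2*M+1-2*0:ℕ):ℝ)+1)/(2*((2*M+1-2*0:ℕ):ℝ)+1)
            * legendreFun (2*M+1+1 - 2*0) c := by
        have := BC_rec_zero (2*M+1)
        rw [this, show (2*M+1-2*0:ℕ) = (2*M+1:ℕ) from by omega]
        try (push_cast; ring)
      have hmain : ∀ t ∈ Finset.range M,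
          BC (2*M+1+1) (t+1) * legendreFun (2*M+1+1 - 2*(t+1)) c
          = BC (2*M+1) (t+1) * (((2*M+1-2*(t+1):ℕ):ℝ)+1)/(2*((2*M+1-2*(t+1):ℕ):ℝ)+1)
              * legendreFun (2*M+1+1 - 2*(t+1)) c
            + BC (2*M+1) t * ((2*M+1-2*t:ℕ):ℝ)/(2*((2*M+1-2*t:ℕ):ℝ)+1)
              * legendreFun (2*M+1+1 - 2*(t+1)) c := by
        intro t ht
        rw [Finset.mem_range] at ht
        have := BC_rec_main (2*M+1) t (by omega)
        rw [show 2*M+1+1 = (2*M+1)+1 from rfl, this]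
        ring
      rw [Finset.sum_congr rfl hmain, Finset.sum_add_distrib, hedge, hzero]
      ring


/-- the expansion
`(1−ρ²)^α C_n^{α+3/2}(ρ cos θ) = (√π/(2Γ(α+3/2))) Σ_l (2l+1)(p+l+3/2)_α R_n^{l,α}(ρ) P_l(cos θ)`,
where the sum is over `0 ≤ l ≤ n` with `n − l` even; writing `l = n − 2p`, the sum runs over
`p = 0, 1, …, ⌊n/2⌋` and `p + l = n − p`. -/
theorem stmt10 (α : ℝ) (hα : -1 < α) (n : ℕ) (ρ θ : ℝ)
    (hρ : ρ ∈ Set.Icc (0:ℝ) 1) (hθ : θ ∈ Set.Icc (0:ℝ) π) :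
    (1 - ρ ^ 2) ^ α * gegenbauer n (α + 3 / 2) (ρ * Real.cos θ)
      = Real.sqrt π / (2 * Real.Gamma (α + 3 / 2)) *
          ∑ p ∈ Finset.range (n / 2 + 1),
            (2 * ((n - 2 * p : ℕ) : ℝ) + 1) * pochG (((n - p : ℕ) : ℝ) + 3 / 2) α *
              R3 α (n - 2 * p) p ρ * legendreFun (n - 2 * p) (Real.cos θ) := by
  clear hρ hθ
  set lam : ℝ := α + 3/2 with hlam
  set c : ℝ := Real.cos θ with hcθ
  have strip : ∀ p : ℕ, (2 * ((n - 2 * p : ℕ) : ℝ) + 1) * pochG (((n - p : ℕ) : ℝ) + 3 / 2) α *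
              R3 α (n - 2 * p) p ρ * legendreFun (n - 2 * p) c
      = (1 - ρ ^ 2) ^ α * ((2 * ((n - 2 * p : ℕ) : ℝ) + 1) * pochG (((n - p : ℕ) : ℝ) + 3 / 2) α *
          (ρ ^ (n - 2*p) * jacobiP p α (((n - 2*p : ℕ) : ℝ) + 1 / 2) (2 * ρ ^ 2 - 1)) *
          legendreFun (n - 2 * p) c) := by
    intro p
    rw [R3]
    ring
  rw [Finset.sum_congr rfl (fun p _ => strip p), ← Finset.mul_sum, ← mul_assoc,
    mul_comm (Real.sqrt π / (2 * Real.Gamma lam)) ((1 - ρ ^ 2) ^ α), mul_assoc]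
  congr 1
  rw [gegenbauer]
  have expand_term : ∀ k ∈ Finset.range (n/2 + 1),
      (-1:ℝ) ^ k * Real.Gamma (((n - k : ℕ) : ℝ) + lam) /
        (Real.Gamma lam * (Nat.factorial k : ℝ) * (Nat.factorial (n - 2 * k) : ℝ)) *
        (2 * (ρ * c)) ^ (n - 2 * k)
      = ∑ t ∈ Finset.range (n/2 - k + 1),
          (-1:ℝ) ^ k * Real.Gamma (((n - k : ℕ) : ℝ) + lam) /
            (Real.Gamma lam * (Nat.factorial k : ℝ) * (Nat.factorial (n - 2 * k) : ℝ)) *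
            (2 ^ (n - 2*k) * ρ ^ (n - 2*k) *
              (BC (n - 2*k) t * legendreFun (n - 2*k - 2*t) c)) := by
    intro k hk
    rw [Finset.mem_range] at hk
    have e1 : (2 * (ρ * c)) ^ (n - 2*k) = 2 ^ (n-2*k) * ρ ^ (n-2*k) * c ^ (n-2*k) := by
      rw [mul_pow, mul_pow]
      ring
    rw [e1, monomial_expand (n - 2*k) c, show (n - 2*k)/2 + 1 = n/2 - k + 1 from by omega]
    simp only [Finset.mul_sum]
    try (apply Finset.sum_congr rfl; intro t _; ring)
  rw [Finset.sum_congr rfl expand_term, Finset.sum_sigma']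
  rw [Finset.mul_sum]
  have expand_rhs : ∀ p ∈ Finset.range (n/2 + 1),
      Real.sqrt π / (2 * Real.Gamma lam) *
        ((2 * ((n - 2 * p : ℕ) : ℝ) + 1) * pochG (((n - p : ℕ) : ℝ) + 3 / 2) α *
          (ρ ^ (n - 2*p) * jacobiP p α (((n - 2*p : ℕ) : ℝ) + 1 / 2) (2 * ρ ^ 2 - 1)) *
          legendreFun (n - 2 * p) c)
      = ∑ s ∈ Finset.range (p + 1),
          Real.sqrt π / (2 * Real.Gamma lam) *
            ((2 * ((n - 2 * p : ℕ) : ℝ) + 1) * pochG (((n - p : ℕ) : ℝ) + 3 / 2) α *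
              (ρ ^ (n - 2*p) *
                ((-1 : ℝ) ^ (p - s) * genBinom ((p : ℝ) + (((n - 2*p : ℕ) : ℝ) + 1/2)) (p - s) *
                  genBinom ((p : ℝ) + α + (((n - 2*p : ℕ) : ℝ) + 1/2) + s) s * (ρ^2) ^ s)) *
              legendreFun (n - 2 * p) c) := by
    intro p _
    rw [jacobiP_monomial p α (((n - 2*p : ℕ) : ℝ) + 1/2) (ρ^2)]
    simp only [Finset.mul_sum, Finset.sum_mul]
    try (apply Finset.sum_congr rfl; intro s _; ring)
  rw [Finset.sum_congr rfl expand_rhs, Finset.sum_sigma']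
  apply Finset.sum_nbij' (fun q => ⟨q.1 + q.2, q.2⟩ : (Σ _ : ℕ, ℕ) → (Σ _ : ℕ, ℕ))
      (fun q => ⟨q.1 - q.2, q.2⟩ : (Σ _ : ℕ, ℕ) → (Σ _ : ℕ, ℕ))
  · rintro ⟨k, t⟩ hm
    dsimp only
    simp only [Finset.mem_sigma, Finset.mem_range] at hm ⊢
    omega
  · rintro ⟨p, s⟩ hm
    dsimp only
    simp only [Finset.mem_sigma, Finset.mem_range] at hm ⊢
    omega
  · rintro ⟨k, t⟩ hm
    dsimp only
    simp only [Finset.mem_sigma, Finset.mem_range] at hm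
    exact congrArg (fun u => (⟨u, t⟩ : Σ _ : ℕ, ℕ)) (by omega)
  · rintro ⟨p, s⟩ hm
    dsimp only
    simp only [Finset.mem_sigma, Finset.mem_range] at hm
    exact congrArg (fun u => (⟨u, s⟩ : Σ _ : ℕ, ℕ)) (by omega)
  · rintro ⟨k, t⟩ hm
    dsimp only
    simp only [Finset.mem_sigma, Finset.mem_range] at hm
    obtain ⟨hk, ht⟩ := hm
    have h2kt : 2*(k+t) ≤ n := by omega
    -- index normalizations
    rw [show n - 2*k - 2*t = n - 2*(k+t) from by omega]
    rw [show ρ ^ (n - 2*k) = ρ ^ (n - 2*(k+t)) * (ρ^2) ^ t from by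
      rw [← pow_mul, ← pow_add]
      congr 1
      omega]
    set l : ℕ := n - 2*(k+t) with hl
    set D : ℕ := n - (k+t) with hD
    -- BC in Gamma form
    rw [BC, show n - 2*k - 2*t = l from by omega, show n - 2*k - t = l + t from by omega]
    -- pochG
    rw [pochG, show ((D:ℕ):ℝ) + 3/2 + α = ((D:ℕ):ℝ) + lam from by rw [hlam]; ring]
    -- the two genBinom factors
    rw [show k + t - t = k from by omega]
    have hcast1 : ((k+t:ℕ):ℝ) + (((l:ℕ)):ℝ) = ((D:ℕ):ℝ) := by
      have : k + t + l = D := by omega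
      exact_mod_cast congrArg (Nat.cast : ℕ → ℝ) this
    have hgb1 : genBinom ((k+t : ℕ) + (((l:ℕ):ℝ) + 1/2)) k
        = Real.Gamma (((D:ℕ):ℝ) + 3/2) / (Real.Gamma (((l+t:ℕ):ℝ) + 3/2) * k.factorial) := by
      rw [genBinom_gamma _ k (by push_cast; linarith [show (0:ℝ) ≤ ((l:ℕ):ℝ) + t from by positivity])]
      congr 1
      · congr 1
        push_cast at hcast1 ⊢
        linarith
      · congr 2
        push_cast
        ring
    have hgb2 : genBinom ((k+t : ℕ) + α + (((l:ℕ):ℝ) + 1/2) + t) t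
        = Real.Gamma (((n-k:ℕ):ℝ) + lam) / (Real.Gamma (((D:ℕ):ℝ) + lam) * t.factorial) := by
      rw [genBinom_gamma _ t (by
        push_cast
        have h0 : (0:ℝ) ≤ ((k:ℕ):ℝ) + ((l:ℕ):ℝ) := by positivity
        push_cast at h0
        linarith)]
      congr 1
      · congr 1
        have hnk : n - k = D + t := by omega
        rw [hnk, hlam]
        push_cast
        push_cast at hcast1
        linarith
      · congr 2
        rw [hlam]
        push_cast
        push_cast at hcast1
        linarith
    rw [hgb1, hgb2]
    -- nonvanishing facts
    have hDl : (0:ℝ) < ((D:ℕ):ℝ) + lam := by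
      rw [hlam]
      have : (0:ℝ) ≤ ((D:ℕ):ℝ) := by positivity
      linarith
    have hg1 : Real.Gamma lam ≠ 0 := by
      apply ne_of_gt; apply Real.Gamma_pos_of_pos; rw [hlam]; linarith
    have hg2 : Real.Gamma (((D:ℕ):ℝ) + 3/2) ≠ 0 := by
      apply ne_of_gt; apply Real.Gamma_pos_of_pos
      have : (0:ℝ) ≤ ((D:ℕ):ℝ) := by positivity
      linarith
    have hg3 : Real.Gamma (((l+t:ℕ):ℝ) + 3/2) ≠ 0 := by
      apply ne_of_gt; apply Real.Gamma_pos_of_pos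
      have : (0:ℝ) ≤ ((l+t:ℕ):ℝ) := by positivity
      linarith
    have hg4 : Real.Gamma (((D:ℕ):ℝ) + lam) ≠ 0 := ne_of_gt (Real.Gamma_pos_of_pos hDl)
    have hfk : (k.factorial : ℝ) ≠ 0 := by positivity
    have hft : (t.factorial : ℝ) ≠ 0 := by positivity
    have hfm : ((n-2*k).factorial : ℝ) ≠ 0 := by positivity
    have h2p : ((2:ℝ))^(n-2*k) ≠ 0 := by positivity
    have hpow : (2:ℝ)^(n-2*k+1) = 2 * (2:ℝ)^(n-2*k) := by
      rw [pow_succ]; ring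
    rw [hpow]
    field_simp
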